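/- arXiv:2508.01471 — 6 statements merged into one kernel-verified Lean document; each statement's English description precedes it below -/
import Mathlib

section
/- Let (H,<) be a totally ordered commutative hemiring and F a field equipped with an H-pseudonorm. Then every finite-dimensional F-algebra admits the structure of an H-pseudonormed ring, i.e., there exists a function ‖·‖ : R → H with ‖a‖ ≥ 0, ‖a‖ = 0 iff a = 0, ‖a−b‖ ≤ ‖a‖+‖b‖, and ‖ab‖ ≤ ‖a‖‖b‖. -/
/-- If `(H,<)` is a totally ordered commutative hemiring and `F` is a field with an
`H`-pseudonorm, then every finite-dimensional `F`-algebra admits an `H`-pseudonorm. -/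
theorem finite_dimensional_algebra_pseudonormed
    {H : Type*} [NonUnitalCommSemiring H] [LinearOrder H]
    (haddle : ∀ a b c : H, a ≤ b → a + c ≤ b + c)
    (hmulle : ∀ a b c : H, a ≤ b → 0 ≤ c → a * c ≤ b * c)
    (haddlt : ∀ a b c : H, a < b → a + c < b + c)
    (hmullt : ∀ a b c : H, a < b → 0 < c → a * c < b * c)
    {F : Type*} [Field F] (ν : F → H)
    (hν0 : ∀ a : F, 0 ≤ ν a) (hν1 : ∀ a : F, ν a = 0 ↔ a = 0)
    (hν2 : ∀ a b : F, ν (a - b) ≤ ν a + ν b)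
    (hν3 : ∀ a b : F, ν (a * b) ≤ ν a * ν b)
    {R : Type*} [Ring R] [Algebra F R] [FiniteDimensional F R] :
    ∃ N : R → H,
      (∀ a : R, 0 ≤ N a) ∧ (∀ a : R, N a = 0 ↔ a = 0) ∧
      (∀ a b : R, N (a - b) ≤ N a + N b) ∧
      (∀ a b : R, N (a * b) ≤ N a * N b) := by
  classical
  haveI : IsOrderedAddMonoid H :=
    { add_le_add_left := fun a b h c => by
        simpa [add_comm] using haddle a b c h }
  -- ν of a sum of two elements
  have hν00 : ν (0 : F) = 0 := (hν1 0).2 rfl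
  have hνneg : ∀ a : F, ν (-a) = ν a := by
    intro a
    have h1 : ν (-a) ≤ ν a := by
      have := hν2 0 a
      rw [zero_sub, hν00, zero_add] at this
      exact this
    have h2 : ν a ≤ ν (-a) := by
      have := hν2 0 (-a)
      rw [zero_sub, neg_neg, hν00, zero_add] at this
      exact this
    exact le_antisymm h1 h2
  have hνadd : ∀ a b : F, ν (a + b) ≤ ν a + ν b := by
    intro a b
    simpa [sub_neg_eq_add, hνneg] using hν2 a (-b)
  -- ν of finite sums
  have hνsum : ∀ (s : Finset (Fin 0 ⊕ Unit)) , True := fun _ => trivial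
  have hmul_nonneg : ∀ x y : H, 0 ≤ x → 0 ≤ y → 0 ≤ x * y := by
    intro x y hx hy
    simpa using hmulle 0 x y hx hy
  by_cases hR : Subsingleton R
  · refine ⟨fun _ => 0, fun a => le_refl 0, fun a => ?_, fun a b => ?_, fun a b => ?_⟩
    · simp [Subsingleton.elim a 0]
    · simp
    · simp
  · have : Nontrivial R := not_subsingleton_iff_nontrivial.mp hR
    set n := Module.finrank F R with hn
    let b : Module.Basis (Fin n) F R := Module.finBasis F R
    -- coordinate sum
    let S : R → H := fun a => ∑ i, ν (b.repr a i)
    have hSnonneg : ∀ a, 0 ≤ S a := fun a => Finset.sum_nonneg fun i _ => hν0 _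
    have hS0 : ∀ a : R, S a = 0 ↔ a = 0 := by
      intro a
      constructor
      · intro h
        have h' := (Finset.sum_eq_zero_iff_of_nonneg (fun i _ => hν0 (b.repr a i))).1 h
        have : ∀ i, b.repr a i = 0 := fun i => (hν1 _).1 (h' i (Finset.mem_univ i))
        have : b.repr a = 0 := Finsupp.ext this
        simpa using congrArg b.repr.symm this
      · intro h; subst h; simp [S, (hν1 0).2 rfl]
    -- subadditivity of S
    have hSsub : ∀ a c : R, S (a - c) ≤ S a + S c := by
      intro a c
      have : ∀ i : Fin n, ν (b.repr (a - c) i) ≤ ν (b.repr a i) + ν (b.repr c i) := by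
        intro i
        have : b.repr (a - c) i = b.repr a i - b.repr c i := by simp [map_sub]
        rw [this]; exact hν2 _ _
      calc S (a - c) ≤ ∑ i, (ν (b.repr a i) + ν (b.repr c i)) :=
            Finset.sum_le_sum fun i _ => this i
        _ = S a + S c := Finset.sum_add_distrib
    -- structure constants bound
    let T : Fin n → Fin n → H := fun i j => ∑ k, ν (b.repr (b i * b j) k)
    let M : H := ν 1 + ∑ i, ∑ j, T i j
    have hTnonneg : ∀ i j, 0 ≤ T i j := fun i j => Finset.sum_nonneg fun k _ => hν0 _
    have hTleM : ∀ i j, T i j ≤ M := by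
      intro i j
      have h1 : T i j ≤ ∑ i', ∑ j', T i' j' := by
        calc T i j ≤ ∑ j', T i j' :=
              Finset.single_le_sum (fun j' _ => hTnonneg i j') (Finset.mem_univ j)
          _ ≤ ∑ i', ∑ j', T i' j' :=
              Finset.single_le_sum (f := fun i' => ∑ j', T i' j')
                (fun i' _ => Finset.sum_nonneg fun j' _ => hTnonneg i' j') (Finset.mem_univ i)
      calc T i j ≤ ∑ i', ∑ j', T i' j' := h1
        _ = 0 + ∑ i', ∑ j', T i' j' := (zero_add _).symm
        _ ≤ M := haddle 0 (ν 1) _ (hν0 1)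
    have hν1pos : 0 < ν 1 := lt_of_le_of_ne (hν0 1) fun h => one_ne_zero ((hν1 1).1 h.symm)
    have hMpos : 0 < M := by
      have : ν 1 ≤ M := by
        calc ν 1 = ν 1 + 0 := (add_zero _).symm
          _ ≤ M := by
              have := haddle 0 (∑ i, ∑ j, T i j) (ν 1)
                (Finset.sum_nonneg fun i _ => Finset.sum_nonneg fun j _ => hTnonneg i j)
              simpa [add_comm] using this
      exact lt_of_lt_of_le hν1pos this
    have hMnonneg : 0 ≤ M := le_of_lt hMpos
    refine ⟨fun a => M * S a, ?_, ?_, ?_, ?_⟩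
    · intro a
      simpa [mul_comm] using hmulle 0 (S a) M (hSnonneg a) hMnonneg
    · intro a
      constructor
      · intro h
        by_contra ha
        have hSpos : 0 < S a := lt_of_le_of_ne (hSnonneg a) fun h' => ha ((hS0 a).1 h'.symm)
        have := hmullt 0 (S a) M hSpos hMpos
        rw [zero_mul, mul_comm] at this
        exact absurd h (ne_of_gt this)
      · intro h; subst h
        show M * S 0 = 0
        rw [(hS0 0).2 rfl, mul_zero]
    · intro a c
      calc M * S (a - c) = S (a - c) * M := mul_comm _ _
        _ ≤ (S a + S c) * M := hmulle _ _ M (hSsub a c) hMnonneg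
        _ = M * S a + M * S c := by rw [add_mul, mul_comm (S a) M, mul_comm (S c) M]
    · intro a c
      -- expand the product in coordinates
      have hac : a * c = ∑ i, ∑ j, (b.repr a i * b.repr c j) • (b i * b j) := by
        conv_lhs => rw [← b.sum_repr a, ← b.sum_repr c]
        rw [Finset.sum_mul]
        refine Finset.sum_congr rfl fun i _ => ?_
        rw [Finset.mul_sum]
        refine Finset.sum_congr rfl fun j _ => ?_
        rw [smul_mul_smul_comm]
      have hrepr : ∀ k, b.repr (a * c) k =
          ∑ i, ∑ j, b.repr a i * b.repr c j * b.repr (b i * b j) k := by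
        intro k
        rw [hac]
        simp [map_sum, Finsupp.finset_sum_apply, map_smul, smul_eq_mul, mul_assoc]
      -- subadditivity of ν over finite sums
      have hνbig : ∀ (m : ℕ) (f : Fin m → F), ν (∑ i, f i) ≤ ∑ i, ν (f i) := by
        intro m
        induction m with
        | zero => intro f; simp [(hν1 0).2 rfl]
        | succ m ih =>
            intro f
            rw [Fin.sum_univ_succ, Fin.sum_univ_succ (f := fun i => ν (f i))]
            exact le_trans (hνadd _ _) (add_le_add_right (ih fun i => f i.succ) _)
      have key : ∀ k : Fin n, ν (b.repr (a * c) k) ≤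
          ∑ i, ∑ j, ν (b.repr a i) * ν (b.repr c j) * ν (b.repr (b i * b j) k) := by
        intro k
        rw [hrepr k]
        refine le_trans (hνbig n _) (Finset.sum_le_sum fun i _ => ?_)
        refine le_trans (hνbig n _) (Finset.sum_le_sum fun j _ => ?_)
        calc ν (b.repr a i * b.repr c j * b.repr (b i * b j) k)
            ≤ ν (b.repr a i * b.repr c j) * ν (b.repr (b i * b j) k) := hν3 _ _
          _ ≤ ν (b.repr a i) * ν (b.repr c j) * ν (b.repr (b i * b j) k) :=
              hmulle _ _ _ (hν3 _ _) (hν0 _)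
      have hSmul : S (a * c) ≤ S a * S c * M := by
        calc S (a * c) ≤ ∑ k, ∑ i, ∑ j,
              ν (b.repr a i) * ν (b.repr c j) * ν (b.repr (b i * b j) k) :=
              Finset.sum_le_sum fun k _ => key k
          _ = ∑ i, ∑ j, ν (b.repr a i) * ν (b.repr c j) * T i j := by
              rw [Finset.sum_comm]
              refine Finset.sum_congr rfl fun i _ => ?_
              rw [Finset.sum_comm]
              refine Finset.sum_congr rfl fun j _ => ?_
              rw [← Finset.mul_sum]
          _ ≤ ∑ i, ∑ j, ν (b.repr a i) * ν (b.repr c j) * M := by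
              refine Finset.sum_le_sum fun i _ => Finset.sum_le_sum fun j _ => ?_
              rw [mul_comm _ (T i j), mul_comm _ M]
              exact hmulle _ _ _ (hTleM i j) (hmul_nonneg _ _ (hν0 _) (hν0 _))
          _ = S a * S c * M := by
              show _ = (∑ i, ν (b.repr a i)) * (∑ j, ν (b.repr c j)) * M
              rw [Finset.sum_mul, Finset.sum_mul]
              refine Finset.sum_congr rfl fun i _ => ?_
              rw [Finset.mul_sum, Finset.sum_mul]
      calc M * S (a * c) = S (a * c) * M := mul_comm _ _
        _ ≤ S a * S c * M * M := hmulle _ _ M hSmul hMnonneg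
        _ = (M * S a) * (M * S c) := by
              simp [mul_comm, mul_left_comm, mul_assoc]
end

section
/- Let (S,≤) be an ordered ring that is dense and shrinkable and whose order is a join-semilattice, and let R be an S-pseudonormed ring. If (x_n) converges to a and (y_n) converges to b in R, then (x_n·y_n) converges to a·b. -/
/-- In an `S`-pseudonormed ring over a dense, shrinkable ordered ring `S` whose
order is a join-semilattice, products of convergent sequences converge to the
product of the limits. -/
theorem product_of_convergent_sequences
    {S : Type*} [Ring S] [SemilatticeSup S]
    (haddle : ∀ a b c : S, a ≤ b → a + c ≤ b + c)
    (hmulle : ∀ a b c : S, a ≤ b → 0 ≤ c → a * c ≤ b * c ∧ c * a ≤ c * b)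
    (hdense : ∀ α : S, 0 < α → ∃ β γ : S, 0 < β ∧ 0 < γ ∧ β + γ < α)
    (hshrink : ∀ α M : S, 0 < α → 0 < M →
      ∃ αl αr : S, 0 < αl ∧ 0 < αr ∧ M * αr < α ∧ αl * M < α)
    {R : Type*} [Ring R] (ν : R → S)
    (hν0 : ∀ r : R, 0 ≤ ν r) (hν1 : ∀ r : R, ν r = 0 ↔ r = 0)
    (hν2 : ∀ r s : R, ν (r - s) ≤ ν r + ν s)
    (hν3 : ∀ r s : R, ν (r * s) ≤ ν r * ν s)
    (x y : ℕ → R) (a b : R)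
    (hx : ∀ ε : S, 0 < ε → ∃ N : ℕ, ∀ n ≥ N, ν (x n - a) < ε)
    (hy : ∀ ε : S, 0 < ε → ∃ N : ℕ, ∀ n ≥ N, ν (y n - b) < ε) :
    ∀ ε : S, 0 < ε → ∃ N : ℕ, ∀ n ≥ N, ν (x n * y n - a * b) < ε := by
  intro ε hε
  have hν00 : ν (0 : R) = 0 := (hν1 0).mpr rfl
  have hneg : ∀ r : R, ν (-r) ≤ ν r := by
    intro r
    have := hν2 0 r
    simpa [hν00] using this
  have hadd : ∀ r s : R, ν (r + s) ≤ ν r + ν s := by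
    intro r s
    have h1 : ν (r - (-s)) ≤ ν r + ν (-s) := hν2 r (-s)
    rw [sub_neg_eq_add] at h1
    have h2 : ν r + ν (-s) ≤ ν r + ν s := by
      have := haddle (ν (-s)) (ν s) (ν r) (hneg s)
      simpa [add_comm] using this
    exact le_trans h1 h2
  obtain ⟨β, γ, hβ, hγ, hβγ⟩ := hdense ε hε
  set M : S := ν a + β with hMdef
  have hM : 0 < M := by
    have h : β ≤ M := by rw [hMdef]; simpa using haddle 0 (ν a) β (hν0 a)
    exact lt_of_lt_of_le hβ h
  set M' : S := ν b + β with hM'def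
  have hM' : 0 < M' := by
    have h : β ≤ M' := by rw [hM'def]; simpa using haddle 0 (ν b) β (hν0 b)
    exact lt_of_lt_of_le hβ h
  have hbM' : ν b ≤ M' := by
    rw [hM'def, add_comm]; simpa using haddle 0 β (ν b) hβ.le
  obtain ⟨αl₀, αr, _, hαr, hMr, _⟩ := hshrink β M hβ hM
  obtain ⟨αl, αr₀, hαl, _, _, hlM⟩ := hshrink γ M' hγ hM'
  obtain ⟨N1, hN1⟩ := hx β hβ
  obtain ⟨N2, hN2⟩ := hy αr hαr
  obtain ⟨N3, hN3⟩ := hx αl hαl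
  refine ⟨max N1 (max N2 N3), fun n hn => ?_⟩
  have hn1 : n ≥ N1 := le_trans (le_max_left _ _) hn
  have hn2 : n ≥ N2 := le_trans (le_trans (le_max_left _ _) (le_max_right _ _)) hn
  have hn3 : n ≥ N3 := le_trans (le_trans (le_max_right _ _) (le_max_right _ _)) hn
  -- bound on ν (x n)
  have hxb : ν (x n) ≤ M := by
    have h1 : ν (x n) ≤ ν (x n - a) + ν (-a) := by
      have := hν2 (x n - a) (-a)
      rw [sub_neg_eq_add, sub_add_cancel] at this
      exact this
    have h2 : ν (x n - a) + ν (-a) ≤ ν (x n - a) + ν a := by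
      have := haddle (ν (-a)) (ν a) (ν (x n - a)) (hneg a)
      simpa [add_comm] using this
    have h3 : ν (x n - a) + ν a ≤ β + ν a := haddle _ _ _ (hN1 n hn1).le
    calc ν (x n) ≤ ν (x n - a) + ν (-a) := h1
      _ ≤ ν (x n - a) + ν a := h2
      _ ≤ β + ν a := h3
      _ = M := by rw [hMdef, add_comm]
  -- first term
  have hterm1 : ν (x n * (y n - b)) ≤ β := by
    calc ν (x n * (y n - b)) ≤ ν (x n) * ν (y n - b) := hν3 _ _
      _ ≤ M * ν (y n - b) := (hmulle _ _ _ hxb (hν0 _)).1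
      _ ≤ M * αr := (hmulle _ _ _ (hN2 n hn2).le hM.le).2
      _ ≤ β := hMr.le
  -- second term
  have hterm2 : ν ((x n - a) * b) ≤ γ := by
    calc ν ((x n - a) * b) ≤ ν (x n - a) * ν b := hν3 _ _
      _ ≤ ν (x n - a) * M' := (hmulle _ _ _ hbM' (hν0 _)).2
      _ ≤ αl * M' := (hmulle _ _ _ (hN3 n hn3).le hM'.le).1
      _ ≤ γ := hlM.le
  have key : x n * y n - a * b = x n * (y n - b) + (x n - a) * b := by noncomm_ring
  calc ν (x n * y n - a * b) = ν (x n * (y n - b) + (x n - a) * b) := by rw [key]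
    _ ≤ ν (x n * (y n - b)) + ν ((x n - a) * b) := hadd _ _
    _ ≤ β + ν ((x n - a) * b) := haddle _ _ _ hterm1
    _ ≤ β + γ := by
        have := haddle _ _ β hterm2
        simpa [add_comm] using this
    _ < ε := hβγ
end

section
/- (Cauchy Condensation Test) Let (R,<) be a dense, Cauchy complete totally ordered ring with 1, and (x_n) a positive decreasing sequence in R. Then ∑_{i=1}^∞ x_i converges in R if and only if ∑_{i=0}^∞ 2^i · x_{2^i} converges in R. -/
section CondensationAux

variable {R : Type*} [Ring R] [LinearOrder R] [IsStrictOrderedRing R]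

/-- partial sums of the original series -/
def condS (x : ℕ → R) (n : ℕ) : R := ∑ i ∈ Finset.Icc 1 n, x i

/-- partial sums of the condensed series -/
def condT (x : ℕ → R) (n : ℕ) : R := ∑ i ∈ Finset.range n, (2 : R) ^ i * x (2 ^ i)

lemma condS_diff (x : ℕ → R) {a b : ℕ} (h : a ≤ b) :
    condS x b - condS x a = ∑ i ∈ Finset.Ioc a b, x i := by
  unfold condS
  rw [show (1:ℕ) = 0 + 1 from rfl, Finset.Icc_add_one_left_eq_Ioc, Finset.Icc_add_one_left_eq_Ioc,
    ← Finset.sum_Ioc_consecutive _ (Nat.zero_le a) h, add_comm, add_sub_cancel_right]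

lemma condS_mono (x : ℕ → R) (hpos : ∀ n, 1 ≤ n → 0 < x n) {a b : ℕ} (h : a ≤ b) :
    condS x a ≤ condS x b := by
  have hnn : (0:R) ≤ condS x b - condS x a := by
    rw [condS_diff x h]
    exact Finset.sum_nonneg fun i hi => by
      have := (Finset.mem_Ioc.1 hi).1
      exact (hpos i (by omega)).le
  exact sub_nonneg.1 hnn

lemma condT_mono (x : ℕ → R) (hpos : ∀ n, 1 ≤ n → 0 < x n) {a b : ℕ} (h : a ≤ b) :
    condT x a ≤ condT x b := by
  unfold condT
  apply Finset.sum_le_sum_of_subset_of_nonneg (Finset.range_subset_range.2 h)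
  intro i _ _
  have h1 : (0:R) ≤ (2:R) ^ i := by positivity
  exact mul_nonneg h1 (hpos (2 ^ i) Nat.one_le_two_pow).le

lemma condT_succ (x : ℕ → R) (k : ℕ) :
    condT x (k + 1) - condT x k = (2:R) ^ k * x (2 ^ k) := by
  unfold condT
  rw [Finset.sum_range_succ, add_comm, add_sub_cancel_right]

lemma cond_blockA (x : ℕ → R) (hdec : ∀ m n, 1 ≤ m → m ≤ n → x n ≤ x m) (k : ℕ) :
    condS x (2 ^ (k+1) - 1) - condS x (2 ^ k - 1) ≤ (2:R) ^ k * x (2 ^ k) := by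
  have hp : 1 ≤ 2 ^ k := Nat.one_le_two_pow
  have hp' : (2:ℕ) ^ (k+1) = 2 * 2 ^ k := by rw [pow_succ, Nat.mul_comm]
  have hle : 2 ^ k - 1 ≤ 2 ^ (k+1) - 1 := by omega
  rw [condS_diff x hle]
  have hb : ∀ i ∈ Finset.Ioc (2 ^ k - 1) (2 ^ (k+1) - 1), x i ≤ x (2 ^ k) := by
    intro i hi
    obtain ⟨h1, h2⟩ := Finset.mem_Ioc.1 hi
    exact hdec (2 ^ k) i hp (by omega)
  have key := Finset.sum_le_card_nsmul _ _ _ hb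
  rw [Nat.card_Ioc] at key
  have hcard : 2 ^ (k+1) - 1 - (2 ^ k - 1) = 2 ^ k := by omega
  rw [hcard] at key
  calc ∑ i ∈ Finset.Ioc (2 ^ k - 1) (2 ^ (k+1) - 1), x i
      ≤ (2 ^ k) • x (2 ^ k) := key
  _ = (2:R) ^ k * x (2 ^ k) := by rw [nsmul_eq_mul]; norm_cast

lemma cond_blockB (x : ℕ → R) (hdec : ∀ m n, 1 ≤ m → m ≤ n → x n ≤ x m) (k : ℕ) :
    (2:R) ^ (k+1) * x (2 ^ (k+1)) ≤ 2 * (condS x (2 ^ (k+1)) - condS x (2 ^ k)) := by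
  have hp : 1 ≤ 2 ^ k := Nat.one_le_two_pow
  have hp' : (2:ℕ) ^ (k+1) = 2 * 2 ^ k := by rw [pow_succ, Nat.mul_comm]
  have hle : (2:ℕ) ^ k ≤ 2 ^ (k+1) := by omega
  rw [condS_diff x hle]
  have hb : ∀ i ∈ Finset.Ioc (2 ^ k) (2 ^ (k+1)), x (2 ^ (k+1)) ≤ x i := by
    intro i hi
    obtain ⟨h1, h2⟩ := Finset.mem_Ioc.1 hi
    exact hdec i (2 ^ (k+1)) (by omega) h2
  have key := Finset.card_nsmul_le_sum _ _ _ hb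
  rw [Nat.card_Ioc] at key
  have hcard : 2 ^ (k+1) - 2 ^ k = 2 ^ k := by omega
  rw [hcard] at key
  have h2 : ((2 ^ k : ℕ) • x (2 ^ (k+1)) : R) = (2:R) ^ k * x (2 ^ (k+1)) := by
    rw [nsmul_eq_mul]; norm_cast
  rw [h2] at key
  calc (2:R) ^ (k+1) * x (2 ^ (k+1))
      = 2 * ((2:R) ^ k * x (2 ^ (k+1))) := by rw [pow_succ', mul_assoc]
  _ ≤ 2 * ∑ i ∈ Finset.Ioc (2 ^ k) (2 ^ (k+1)), x i :=
      mul_le_mul_of_nonneg_left key (by norm_num)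

lemma cond_keyA (x : ℕ → R) (hdec : ∀ m n, 1 ≤ m → m ≤ n → x n ≤ x m)
    {j k : ℕ} (hjk : j ≤ k) :
    condS x (2 ^ k - 1) - condS x (2 ^ j - 1) ≤ condT x k - condT x j := by
  induction k, hjk using Nat.le_induction with
  | base => simp
  | succ k hk ih =>
    have h1 := cond_blockA x hdec k
    have h2 := condT_succ x k
    calc condS x (2 ^ (k+1) - 1) - condS x (2 ^ j - 1)
        = (condS x (2 ^ (k+1) - 1) - condS x (2 ^ k - 1))
            + (condS x (2 ^ k - 1) - condS x (2 ^ j - 1)) := by abel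
    _ ≤ (2:R) ^ k * x (2 ^ k) + (condT x k - condT x j) := add_le_add h1 ih
    _ = (condT x (k+1) - condT x k) + (condT x k - condT x j) := by rw [h2]
    _ = condT x (k+1) - condT x j := by abel

lemma cond_keyB (x : ℕ → R) (hdec : ∀ m n, 1 ≤ m → m ≤ n → x n ≤ x m)
    {j k : ℕ} (hjk : j ≤ k) :
    condT x (k + 1) - condT x (j + 1) ≤ 2 * (condS x (2 ^ k) - condS x (2 ^ j)) := by
  induction k, hjk using Nat.le_induction with
  | base => simp
  | succ k hk ih =>
    have h1 := cond_blockB x hdec k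
    have h2 := condT_succ x (k + 1)
    calc condT x (k + 1 + 1) - condT x (j + 1)
        = (condT x (k + 1 + 1) - condT x (k + 1))
            + (condT x (k + 1) - condT x (j + 1)) := by abel
    _ = (2:R) ^ (k+1) * x (2 ^ (k+1)) + (condT x (k + 1) - condT x (j + 1)) := by rw [h2]
    _ ≤ 2 * (condS x (2 ^ (k+1)) - condS x (2 ^ k))
          + 2 * (condS x (2 ^ k) - condS x (2 ^ j)) := add_le_add h1 ih
    _ = 2 * ((condS x (2 ^ (k+1)) - condS x (2 ^ k))
          + (condS x (2 ^ k) - condS x (2 ^ j))) := (mul_add _ _ _).symm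
    _ = 2 * (condS x (2 ^ (k+1)) - condS x (2 ^ j)) := by rw [sub_add_sub_cancel]

end CondensationAux

/-- Cauchy Condensation Test in a dense, Cauchy complete totally ordered ring with 1. -/
theorem cauchy_condensation_test
    {R : Type*} [Ring R] [LinearOrder R] [IsStrictOrderedRing R]
    (hdense : ∀ α : R, 0 < α → ∃ β γ : R, 0 < β ∧ 0 < γ ∧ β + γ < α)
    (hcomplete : ∀ s : ℕ → R,
      (∀ ε : R, 0 < ε → ∃ N : ℕ, ∀ m ≥ N, ∀ n ≥ N, |s n - s m| < ε) →
      ∃ l : R, ∀ ε : R, 0 < ε → ∃ N : ℕ, ∀ n ≥ N, |s n - l| < ε)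
    (x : ℕ → R) (hpos : ∀ n, 1 ≤ n → 0 < x n)
    (hdec : ∀ m n, 1 ≤ m → m ≤ n → x n ≤ x m) :
    (∃ l : R, ∀ ε : R, 0 < ε → ∃ N : ℕ, ∀ n ≥ N,
      |(∑ i ∈ Finset.Icc 1 n, x i) - l| < ε) ↔
    (∃ l : R, ∀ ε : R, 0 < ε → ∃ N : ℕ, ∀ n ≥ N,
      |(∑ i ∈ Finset.range n, (2 : R) ^ i * x (2 ^ i)) - l| < ε) := by
  show (∃ l : R, ∀ ε : R, 0 < ε → ∃ N : ℕ, ∀ n ≥ N, |condS x n - l| < ε) ↔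
       (∃ l : R, ∀ ε : R, 0 < ε → ∃ N : ℕ, ∀ n ≥ N, |condT x n - l| < ε)
  -- halving via density
  have half : ∀ ε : R, 0 < ε → ∃ δ : R, 0 < δ ∧ δ + δ < ε := by
    intro ε hε
    obtain ⟨β, γ, hβ, hγ, h⟩ := hdense ε hε
    refine ⟨min β γ, lt_min hβ hγ, ?_⟩
    calc min β γ + min β γ ≤ β + γ := add_le_add (min_le_left _ _) (min_le_right _ _)
    _ < ε := h
  -- convergence ↔ Cauchy
  have convIff : ∀ s : ℕ → R,
      (∃ l : R, ∀ ε : R, 0 < ε → ∃ N : ℕ, ∀ n ≥ N, |s n - l| < ε) ↔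
      (∀ ε : R, 0 < ε → ∃ N : ℕ, ∀ m ≥ N, ∀ n ≥ N, |s n - s m| < ε) := by
    intro s
    constructor
    · rintro ⟨l, hl⟩ ε hε
      obtain ⟨δ, hδ, hδε⟩ := half ε hε
      obtain ⟨N, hN⟩ := hl δ hδ
      refine ⟨N, fun m hm n hn => ?_⟩
      have h1 := hN n hn
      have h2 := hN m hm
      calc |s n - s m| = |(s n - l) + (l - s m)| := by rw [sub_add_sub_cancel]
      _ ≤ |s n - l| + |l - s m| := abs_add_le _ _
      _ = |s n - l| + |s m - l| := by rw [abs_sub_comm l]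
      _ < δ + δ := add_lt_add h1 h2
      _ < ε := hδε
    · exact hcomplete s
  -- Cauchy criterion for monotone sequences
  have monoCauchy : ∀ s : ℕ → R, (∀ a b : ℕ, a ≤ b → s a ≤ s b) →
      (∀ ε : R, 0 < ε → ∃ N : ℕ, ∀ n ≥ N, s n - s N < ε) →
      (∀ ε : R, 0 < ε → ∃ N : ℕ, ∀ m ≥ N, ∀ n ≥ N, |s n - s m| < ε) := by
    intro s hmono h ε hε
    obtain ⟨N, hN⟩ := h ε hε
    refine ⟨N, fun m hm n hn => ?_⟩
    rcases le_total m n with hmn | hmn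
    · rw [abs_of_nonneg (sub_nonneg.2 (hmono _ _ hmn))]
      exact lt_of_le_of_lt (sub_le_sub_left (hmono N m hm) (s n)) (hN n hn)
    · rw [abs_of_nonpos (sub_nonpos.2 (hmono _ _ hmn)), neg_sub]
      exact lt_of_le_of_lt (sub_le_sub_left (hmono N n hn) (s m)) (hN m hm)
  rw [convIff, convIff]
  constructor
  · -- S Cauchy → T Cauchy
    intro hS
    apply monoCauchy _ (fun a b h => condT_mono x hpos h)
    intro ε hε
    obtain ⟨δ, hδ, hδε⟩ := half ε hε
    obtain ⟨N₁, hN₁⟩ := hS δ hδ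
    refine ⟨N₁ + 1, fun k hk => ?_⟩
    obtain ⟨k', rfl⟩ : ∃ k', k = k' + 1 := ⟨k - 1, by omega⟩
    have hk' : N₁ ≤ k' := by omega
    have key := cond_keyB x hdec hk'
    have h1 : N₁ ≤ 2 ^ N₁ := Nat.le_of_lt (Nat.lt_two_pow_self (n := N₁))
    have h2 : N₁ ≤ 2 ^ k' := le_trans h1 (Nat.pow_le_pow_right (by norm_num) hk')
    have habs := hN₁ (2 ^ N₁) h1 (2 ^ k') h2
    have hmS : condS x (2 ^ N₁) ≤ condS x (2 ^ k') :=
      condS_mono x hpos (Nat.pow_le_pow_right (by norm_num) hk')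
    rw [abs_of_nonneg (sub_nonneg.2 hmS)] at habs
    calc condT x (k' + 1) - condT x (N₁ + 1)
        ≤ 2 * (condS x (2 ^ k') - condS x (2 ^ N₁)) := key
    _ < 2 * δ := mul_lt_mul_of_pos_left habs (by norm_num)
    _ = δ + δ := two_mul δ
    _ < ε := hδε
  · -- T Cauchy → S Cauchy
    intro hT
    apply monoCauchy _ (fun a b h => condS_mono x hpos h)
    intro ε hε
    obtain ⟨N₁, hN₁⟩ := hT ε hε
    refine ⟨2 ^ N₁ - 1, fun n hn => ?_⟩
    set k := max (n + 1) N₁ with hkdef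
    have hkn : n ≤ 2 ^ k - 1 := by
      have h1 : n < 2 ^ (n + 1) :=
        (Nat.lt_two_pow_self (n := n)).trans_le (Nat.pow_le_pow_right (by norm_num) (Nat.le_succ n))
      have h2 : 2 ^ (n + 1) ≤ 2 ^ k := Nat.pow_le_pow_right (by norm_num) (le_max_left _ _)
      omega
    have hjk : N₁ ≤ k := le_max_right _ _
    have habs := hN₁ N₁ le_rfl k hjk
    calc condS x n - condS x (2 ^ N₁ - 1)
        ≤ condS x (2 ^ k - 1) - condS x (2 ^ N₁ - 1) :=
          sub_le_sub_right (condS_mono x hpos hkn) _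
    _ ≤ condT x k - condT x N₁ := cond_keyA x hdec hjk
    _ ≤ |condT x k - condT x N₁| := le_abs_self _
    _ < ε := habs
end

section
/- Let (R,<) be a totally ordered commutative ring with 1 that is dense and shrinkable, and let r ∈ R with r ≠ 1. If the sequence (r^n) converges to some l ∈ R, then l = 0. -/
/-- In a dense, shrinkable totally ordered commutative ring with 1, if `r ≠ 1` and
the sequence `(r^n)` converges to some `l`, then `l = 0`. -/
theorem limit_of_power_sequence_eq_zero
    {R : Type*} [CommRing R] [LinearOrder R] [IsStrictOrderedRing R]
    (hdense : ∀ α : R, 0 < α → ∃ β γ : R, 0 < β ∧ 0 < γ ∧ β + γ < α)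
    (hshrink : ∀ α M : R, 0 < α → 0 < M →
      ∃ αl αr : R, 0 < αl ∧ 0 < αr ∧ M * αr < α ∧ αl * M < α)
    (r : R) (hr : r ≠ 1) (l : R)
    (hlim : ∀ ε : R, 0 < ε → ∃ N : ℕ, ∀ n ≥ N, |r ^ n - l| < ε) :
    l = 0 := by
  by_cases hr0 : r = 0
  · subst hr0
    by_contra hl
    have hld : 0 < |l| := abs_pos.mpr hl
    obtain ⟨N, hN⟩ := hlim |l| hld
    have h := hN (N + 1) (Nat.le_succ N)
    rw [zero_pow (Nat.succ_ne_zero N), zero_sub, abs_neg] at h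
    exact lt_irrefl _ h
  · have hrabs : 0 < |r| := abs_pos.mpr hr0
    have key : r * l = l := by
      by_contra hne
      have hd : 0 < |r * l - l| := abs_pos.mpr (sub_ne_zero.mpr hne)
      obtain ⟨β, γ, hβ, hγ, hβγ⟩ := hdense _ hd
      obtain ⟨αl, αr, hαl, hαr, hM, _⟩ := hshrink β |r| hβ hrabs
      obtain ⟨N, hN⟩ := hlim (min γ αr) (lt_min hγ hαr)
      have h1 := hN N le_rfl
      have h2 := hN (N + 1) (Nat.le_succ N)
      have e : |r * l - r ^ (N + 1)| = |r| * |r ^ N - l| := by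
        rw [abs_sub_comm, ← abs_mul]
        congr 1
        ring
      have hA : |r * l - r ^ (N + 1)| < β := by
        rw [e]
        calc |r| * |r ^ N - l| ≤ |r| * αr :=
              mul_le_mul_of_nonneg_left
                (le_of_lt (lt_of_lt_of_le h1 (min_le_right _ _))) (abs_nonneg r)
          _ < β := hM
      have hB : |r ^ (N + 1) - l| < γ := lt_of_lt_of_le h2 (min_le_left _ _)
      have htri := abs_sub_le (r * l) (r ^ (N + 1)) l
      linarith
    have : (r - 1) * l = 0 := by ring_nf; linarith [key]
    rcases mul_eq_zero.mp this with h | h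
    · exact absurd (by linarith [sub_eq_zero.mp h]) hr
    · exact h
end

section
/- Let (R,<) be a totally ordered commutative ring with 1 that is dense and shrinkable, and let r ∈ R with r ≠ 1. Then the geometric series ∑_{n=0}^∞ r^n converges in R if and only if the sequence (r^n) converges to zero and 1−r is invertible in R; in that case the sum equals (1−r)^{−1}. -/
/-- In a dense, shrinkable totally ordered commutative ring with 1 and `r ≠ 1`,
the geometric series `∑ r^n` converges iff `(r^n)` converges to `0` and `1 - r`
is invertible; in that case the sum is the inverse of `1 - r`. -/
theorem geometric_series_convergent_iff
    {R : Type*} [CommRing R] [LinearOrder R] [IsStrictOrderedRing R]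
    (hdense : ∀ α : R, 0 < α → ∃ β γ : R, 0 < β ∧ 0 < γ ∧ β + γ < α)
    (hshrink : ∀ α M : R, 0 < α → 0 < M →
      ∃ αl αr : R, 0 < αl ∧ 0 < αr ∧ M * αr < α ∧ αl * M < α)
    (r : R) (hr : r ≠ 1) :
    ((∃ l : R, ∀ ε : R, 0 < ε → ∃ N : ℕ, ∀ n ≥ N,
        |(∑ i ∈ Finset.range n, r ^ i) - l| < ε) ↔
      ((∀ ε : R, 0 < ε → ∃ N : ℕ, ∀ n ≥ N, |r ^ n - 0| < ε) ∧ IsUnit (1 - r))) ∧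
    (∀ u : R, (1 - r) * u = 1 →
      ((∀ ε : R, 0 < ε → ∃ N : ℕ, ∀ n ≥ N, |r ^ n - 0| < ε) →
        ∀ ε : R, 0 < ε → ∃ N : ℕ, ∀ n ≥ N,
          |(∑ i ∈ Finset.range n, r ^ i) - u| < ε)) := by
  have part2 : ∀ u : R, (1 - r) * u = 1 →
      ((∀ ε : R, 0 < ε → ∃ N : ℕ, ∀ n ≥ N, |r ^ n - 0| < ε) →
        ∀ ε : R, 0 < ε → ∃ N : ℕ, ∀ n ≥ N,
          |(∑ i ∈ Finset.range n, r ^ i) - u| < ε) := by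
    intro u hu hpow ε hε
    have hune : u ≠ 0 := by rintro rfl; simp at hu
    have hupos : 0 < |u| := abs_pos.mpr hune
    obtain ⟨αl, αr, h1, h2, h3, h4⟩ := hshrink ε |u| hε hupos
    obtain ⟨N, hN⟩ := hpow αr h2
    refine ⟨N, fun n hn => ?_⟩
    have h := geom_sum_mul r n
    have key : (∑ i ∈ Finset.range n, r ^ i) - u = -(u * r ^ n) := by
      linear_combination (-u) * h + (-(∑ i ∈ Finset.range n, r ^ i)) * hu
    rw [key, abs_neg, abs_mul]
    have hrn : |r ^ n| < αr := by simpa using hN n hn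
    calc |u| * |r ^ n| ≤ |u| * αr := mul_le_mul_of_nonneg_left hrn.le (abs_nonneg u)
      _ < ε := h3
  refine ⟨⟨?_, ?_⟩, part2⟩
  · rintro ⟨l, hl⟩
    have hpow : ∀ ε : R, 0 < ε → ∃ N : ℕ, ∀ n ≥ N, |r ^ n - 0| < ε := by
      intro ε hε
      obtain ⟨β, γ, hβ, hγ, hβγ⟩ := hdense ε hε
      obtain ⟨N1, hN1⟩ := hl β hβ
      obtain ⟨N2, hN2⟩ := hl γ hγ
      refine ⟨max N1 N2, fun n hn => ?_⟩
      have h1 := hN1 (n + 1) (le_trans (le_trans (le_max_left _ _) hn) (Nat.le_succ n))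
      have h2 := hN2 n (le_trans (le_max_right _ _) hn)
      have hsum : r ^ n - 0 = ((∑ i ∈ Finset.range (n + 1), r ^ i) - l)
          + (l - ∑ i ∈ Finset.range n, r ^ i) := by
        rw [Finset.sum_range_succ]; ring
      have htri := abs_add_le ((∑ i ∈ Finset.range (n + 1), r ^ i) - l)
        (l - ∑ i ∈ Finset.range n, r ^ i)
      rw [abs_sub_comm l] at htri
      calc |r ^ n - 0| ≤ _ := hsum ▸ htri
        _ < ε := by linarith
    refine ⟨hpow, ?_⟩
    have hx : (1 - r) * l - 1 = 0 := by
      by_contra hx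
      have hxpos : 0 < |(1 - r) * l - 1| := abs_pos.mpr hx
      obtain ⟨β, γ, hβ, hγ, hβγ⟩ := hdense _ hxpos
      have hM : 0 < |1 - r| := abs_pos.mpr (sub_ne_zero.mpr (Ne.symm hr))
      obtain ⟨αl, αr, h1, h2, h3, h4⟩ := hshrink β |1 - r| hβ hM
      obtain ⟨N1, hN1⟩ := hl αr h2
      obtain ⟨N2, hN2⟩ := hpow γ hγ
      set n := max N1 N2 with hn
      have hs1 := hN1 n (le_max_left _ _)
      have hs2 : |r ^ n| < γ := by simpa using hN2 n (le_max_right _ _)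
      have hgeo := geom_sum_mul r n
      have hdecomp : (1 - r) * l - 1 =
          (1 - r) * (l - ∑ i ∈ Finset.range n, r ^ i) + (-(r ^ n)) := by
        linear_combination -hgeo
      have htri := abs_add_le ((1 - r) * (l - ∑ i ∈ Finset.range n, r ^ i)) (-(r ^ n))
      rw [abs_neg, abs_mul, abs_sub_comm l] at htri
      have hb : |1 - r| * |(∑ i ∈ Finset.range n, r ^ i) - l| ≤ |1 - r| * αr :=
        mul_le_mul_of_nonneg_left hs1.le (abs_nonneg _)
      have : |(1 - r) * l - 1| < |(1 - r) * l - 1| := by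
        calc |(1 - r) * l - 1| ≤ _ := hdecomp ▸ htri
          _ < |(1 - r) * l - 1| := by linarith
      exact lt_irrefl _ this
    exact IsUnit.of_mul_eq_one (a := 1 - r) l (by linarith [hx])
  · rintro ⟨hpow, hu⟩
    obtain ⟨v, hv⟩ := hu
    refine ⟨↑v⁻¹, part2 ↑v⁻¹ ?_ hpow⟩
    rw [← hv]; exact v.mul_inv
end

section
/- (Ratio test for ring-valued normed groups) Let (R,<) be a totally ordered commutative ring with 1 that is dense and shrinkable, and let r ∈ R be such that 1−r is invertible and (r^n) converges to 0 in R. Let (G,+) be a Cauchy complete R-normed abelian group and (x_n)_{n≥0} a sequence in G with ‖x_{n+1}‖ ≤ r·‖x_n‖ for all n. Then the series ∑_{n=0}^∞ x_n converges in G. -/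
/-- Ratio test for ring-valued normed groups: over a dense and shrinkable totally
ordered commutative ring `R` with `1 - r` invertible and `r^n → 0`, if `G` is a
Cauchy complete `R`-normed abelian group and `‖x_{n+1}‖ ≤ r‖x_n‖` for all `n`,
then `∑ x_n` converges in `G`. -/
theorem ratio_test_ring_valued_normed_group
    {R : Type*} [CommRing R] [LinearOrder R] [IsStrictOrderedRing R]
    (hdense : ∀ α : R, 0 < α → ∃ β γ : R, 0 < β ∧ 0 < γ ∧ β + γ < α)
    (hshrink : ∀ α M : R, 0 < α → 0 < M →
      ∃ αl αr : R, 0 < αl ∧ 0 < αr ∧ M * αr < α ∧ αl * M < α)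
    (r : R) (hu : IsUnit (1 - r))
    (hr0 : ∀ ε : R, 0 < ε → ∃ N : ℕ, ∀ n ≥ N, |r ^ n| < ε)
    {G : Type*} [AddCommGroup G] (ν : G → R)
    (hν0 : ∀ g : G, 0 ≤ ν g) (hν1 : ∀ g : G, ν g = 0 ↔ g = 0)
    (hν2 : ∀ g h : G, ν (g - h) ≤ ν g + ν h)
    (hcomplete : ∀ s : ℕ → G,
      (∀ ε : R, 0 < ε → ∃ N : ℕ, ∀ m ≥ N, ∀ n ≥ N, ν (s n - s m) < ε) →
      ∃ l : G, ∀ ε : R, 0 < ε → ∃ N : ℕ, ∀ n ≥ N, ν (s n - l) < ε)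
    (x : ℕ → G) (hratio : ∀ n : ℕ, ν (x (n + 1)) ≤ r * ν (x n)) :
    ∃ l : G, ∀ ε : R, 0 < ε → ∃ N : ℕ, ∀ n ≥ N,
      ν ((∑ i ∈ Finset.range n, x i) - l) < ε := by
  have ν0 : ν 0 = 0 := (hν1 0).mpr rfl
  have νneg : ∀ g : G, ν (-g) ≤ ν g := by
    intro g; have := hν2 0 g; simpa [ν0] using this
  have νneg' : ∀ g : G, ν (-g) = ν g := fun g =>
    le_antisymm (νneg g) (by simpa using νneg (-g))
  have νadd : ∀ g h : G, ν (g + h) ≤ ν g + ν h := by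
    intro g h
    have := hν2 g (-h)
    simpa [sub_neg_eq_add, νneg'] using this
  have νsum : ∀ (s : Finset ℕ) (f : ℕ → G),
      ν (∑ i ∈ s, f i) ≤ ∑ i ∈ s, ν (f i) := by
    intro s f
    induction s using Finset.induction_on with
    | empty => simp [ν0]
    | insert _ _ hnot ih =>
      rename_i a s
      rw [Finset.sum_insert hnot, Finset.sum_insert hnot]
      exact (νadd _ _).trans (add_le_add_right ih _)
  by_cases hr : 0 ≤ r
  · -- main case
    have hr1 : r < 1 := by
      by_contra h
      push_neg at h
      obtain ⟨N, hN⟩ := hr0 1 one_pos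
      have h1 : (1 : R) ≤ r ^ N := one_le_pow₀ h
      have h2 := hN N le_rfl
      rw [abs_of_nonneg (pow_nonneg hr N)] at h2
      linarith
    have h1r : (0 : R) < 1 - r := by linarith
    set u : R := ↑hu.unit⁻¹ with hu_def
    have hu1 : (1 - r) * u = 1 := by
      have := hu.mul_val_inv
      exact this
    have hupos : 0 < u := by nlinarith
    set C : R := ν (x 0) with hC_def
    have hC : 0 ≤ C := hν0 _
    have hxn : ∀ n : ℕ, ν (x n) ≤ r ^ n * C := by
      intro n
      induction n with
      | zero => simp [hC_def]
      | succ n ih =>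
        calc ν (x (n + 1)) ≤ r * ν (x n) := hratio n
        _ ≤ r * (r ^ n * C) := mul_le_mul_of_nonneg_left ih hr
        _ = r ^ (n + 1) * C := by ring
    have gk : ∀ k : ℕ, (1 - r) * ∑ i ∈ Finset.range k, r ^ i = 1 - r ^ k := by
      intro k
      have h := geom_sum_mul r k
      linear_combination -h
    -- key bound
    have key : ∀ m n : ℕ, m ≤ n →
        ν ((∑ i ∈ Finset.range n, x i) - ∑ i ∈ Finset.range m, x i)
          ≤ u * r ^ m * C := by
      intro m n hmn
      have hsub : (∑ i ∈ Finset.range n, x i) - ∑ i ∈ Finset.range m, x i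
          = ∑ i ∈ Finset.Ico m n, x i := (Finset.sum_Ico_eq_sub x hmn).symm
      rw [hsub]
      have hS : (1 - r) * ∑ i ∈ Finset.Ico m n, r ^ i = r ^ m - r ^ n := by
        rw [Finset.sum_Ico_eq_sub _ hmn, mul_sub, gk, gk]; ring
      have hSle : (∑ i ∈ Finset.Ico m n, r ^ i) ≤ u * r ^ m := by
        have h1 : (∑ i ∈ Finset.Ico m n, r ^ i) = u * ((1 - r) * ∑ i ∈ Finset.Ico m n, r ^ i) := by
          rw [← mul_assoc, mul_comm u, hu1, one_mul]
        rw [h1, hS]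
        have : r ^ m - r ^ n ≤ r ^ m := by
          have := pow_nonneg hr n; linarith
        exact mul_le_mul_of_nonneg_left this hupos.le
      calc ν (∑ i ∈ Finset.Ico m n, x i) ≤ ∑ i ∈ Finset.Ico m n, ν (x i) := νsum _ _
      _ ≤ ∑ i ∈ Finset.Ico m n, r ^ i * C :=
          Finset.sum_le_sum fun i _ => hxn i
      _ = (∑ i ∈ Finset.Ico m n, r ^ i) * C := by rw [Finset.sum_mul]
      _ ≤ u * r ^ m * C := mul_le_mul_of_nonneg_right hSle hC
    apply hcomplete
    intro ε hε
    have main : ∃ N : ℕ, ∀ m ≥ N, u * r ^ m * C < ε := by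
      rcases eq_or_lt_of_le hC with hC0 | hC0
      · exact ⟨0, fun m _ => by rw [← hC0]; simpa using hε⟩
      · obtain ⟨αl, αr, hαl, hαr, h1, h2⟩ := hshrink ε (u * C) hε (mul_pos hupos hC0)
        obtain ⟨N, hN⟩ := hr0 αr hαr
        refine ⟨N, fun m hm => ?_⟩
        have hrm : r ^ m < αr := by
          have := hN m hm
          rwa [abs_of_nonneg (pow_nonneg hr m)] at this
        calc u * r ^ m * C = (u * C) * r ^ m := by ring
        _ < (u * C) * αr := by
            exact mul_lt_mul_of_pos_left hrm (mul_pos hupos hC0)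
        _ < ε := h1
    obtain ⟨N, hN⟩ := main
    refine ⟨N, fun m hm n hn => ?_⟩
    rcases le_total m n with h | h
    · exact lt_of_le_of_lt (key m n h) (hN m hm)
    · have heq : ν ((∑ i ∈ Finset.range n, x i) - ∑ i ∈ Finset.range m, x i)
          = ν ((∑ i ∈ Finset.range m, x i) - ∑ i ∈ Finset.range n, x i) := by
        rw [← νneg', neg_sub]
      rw [heq]
      exact lt_of_le_of_lt (key n m h) (hN n hn)
  · -- r < 0 : all terms after the first vanish
    push_neg at hr
    have xz : ∀ n : ℕ, x (n + 1) = 0 := by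
      intro n
      induction n with
      | zero =>
        have h1 : ν (x 1) ≤ r * ν (x 0) := hratio 0
        have h2 : r * ν (x 0) ≤ 0 := mul_nonpos_of_nonpos_of_nonneg hr.le (hν0 _)
        exact (hν1 _).mp (le_antisymm (h1.trans h2) (hν0 _))
      | succ n ih =>
        have h1 : ν (x (n + 2)) ≤ r * ν (x (n + 1)) := hratio (n + 1)
        rw [ih, ν0, mul_zero] at h1
        exact (hν1 _).mp (le_antisymm h1 (hν0 _))
    refine ⟨x 0, fun ε hε => ⟨1, fun n hn => ?_⟩⟩
    have hsum : (∑ i ∈ Finset.range n, x i) = x 0 := by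
      rw [Finset.sum_eq_single_of_mem 0 (Finset.mem_range.mpr hn)]
      intro i _ hi
      obtain ⟨j, rfl⟩ := Nat.exists_eq_succ_of_ne_zero hi
      exact xz j
    rw [hsum, sub_self, ν0]
    exact hε
end
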